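/- Let P(z) = A_n z^n + ... + A_1 z + A_0 be a matrix polynomial with complex m×m coefficient matrices, A_n invertible, n ≥ 1, and not all A_j (j < n) the zero matrix. Fix a matrix norm ‖·‖ (submultiplicative). Then every eigenvalue λ of P (i.e., every λ ∈ ℂ with det P(λ) = 0) satisfies |λ| ≤ ρ[P], where ρ[P] is the unique positive solution of ‖A_n^{-1}‖^{-1} x^n = ‖A_{n-1}‖ x^{n-1} + ... + ‖A_1‖ x + ‖A_0‖. -/

import Mathlib

/-- Cauchy's bound for matrix polynomials: every eigenvalue `λ` (with `det P(λ) = 0`)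
satisfies `|λ| ≤ ρ[P]`, the unique positive root of
`‖Aₙ⁻¹‖⁻¹ xⁿ = Σ_{j<n} ‖Aⱼ‖ xʲ`, for any submultiplicative matrix norm. -/
theorem matrix_polynomial_cauchy_bound {m : ℕ}
    (n : ℕ) (hn : 1 ≤ n) (A : ℕ → Matrix (Fin m) (Fin m) ℂ)
    (hinv : IsUnit (A n)) (hlow : ∃ j < n, A j ≠ 0)
    (N : Matrix (Fin m) (Fin m) ℂ → ℝ)
    (hN0 : ∀ M, N M = 0 ↔ M = 0)
    (hNsmul : ∀ (c : ℂ) M, N (c • M) = ‖c‖ * N M)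
    (hNadd : ∀ M₁ M₂, N (M₁ + M₂) ≤ N M₁ + N M₂)
    (hNmul : ∀ M₁ M₂, N (M₁ * M₂) ≤ N M₁ * N M₂)
    (ρ : ℝ) (hρ : 0 < ρ)
    (hroot : (N (A n)⁻¹)⁻¹ * ρ ^ n = ∑ j ∈ Finset.range n, N (A j) * ρ ^ j)
    (lam : ℂ)
    (hlam : (∑ j ∈ Finset.range (n + 1), lam ^ j • A j).det = 0) :
    ‖lam‖ ≤ ρ := by
  classical
  -- basic facts about N
  have hNzero : N 0 = 0 := (hN0 0).2 rfl
  have hNneg : ∀ M, N (-M) = N M := by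
    intro M
    have := hNsmul (-1) M
    simpa using this
  have hNnonneg : ∀ M, 0 ≤ N M := by
    intro M
    have h := hNadd M (-M)
    rw [add_neg_cancel, hNzero, hNneg] at h
    linarith
  have hNsum : ∀ (s : Finset ℕ) (f : ℕ → Matrix (Fin m) (Fin m) ℂ),
      N (∑ j ∈ s, f j) ≤ ∑ j ∈ s, N (f j) := by
    intro s f
    induction s using Finset.induction with
    | empty => simp [hNzero]
    | insert x t hx ih =>
        rw [Finset.sum_insert hx, Finset.sum_insert hx]
        exact (hNadd _ _).trans (by linarith)
  -- dispatch m = 0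
  obtain ⟨j0, hj0, hA0⟩ := hlow
  rcases Nat.eq_zero_or_pos m with hm | hm
  · subst hm
    exact absurd (by ext i j; exact i.elim0 : A j0 = 0) hA0
  by_contra hcon
  push_neg at hcon
  set r := ‖lam‖ with hrdef
  have hr : ρ < r := hcon
  have hr0 : 0 < r := lt_trans hρ hr
  have hlam0 : lam ≠ 0 := norm_pos_iff.mp hr0
  have hln : (lam ^ n) ≠ 0 := pow_ne_zero _ hlam0
  have hdetAn : IsUnit (A n).det := (Matrix.isUnit_iff_isUnit_det (A n)).mp hinv
  have hAB : A n * (A n)⁻¹ = 1 := Matrix.mul_nonsing_inv _ hdetAn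
  have hBA : (A n)⁻¹ * A n = 1 := Matrix.nonsing_inv_mul _ hdetAn
  set S : Matrix (Fin m) (Fin m) ℂ := ∑ j ∈ Finset.range n, lam ^ j • A j with hSdef
  set M : Matrix (Fin m) (Fin m) ℂ := (lam ^ n)⁻¹ • ((A n)⁻¹ * S) with hMdef
  have key : (lam ^ n • A n) * M = S := by
    rw [hMdef, Matrix.mul_smul, Matrix.smul_mul, smul_smul, inv_mul_cancel₀ hln,
      one_smul, ← mul_assoc, hAB, one_mul]
  have hfact : ∑ j ∈ Finset.range (n + 1), lam ^ j • A j = (lam ^ n • A n) * (1 + M) := by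
    rw [Finset.sum_range_succ, mul_add, mul_one, key, ← hSdef, add_comm]
  rw [hfact, Matrix.det_mul, Matrix.det_smul] at hlam
  have hdet1M : (1 + M).det = 0 := by
    rcases mul_eq_zero.mp hlam with h | h
    · rcases mul_eq_zero.mp h with h' | h'
      · exact absurd h' (pow_ne_zero _ hln)
      · exact absurd h' hdetAn.ne_zero
    · exact h
  -- 1 ≠ 0 as a matrix, hence (A n)⁻¹ ≠ 0
  have hone : (1 : Matrix (Fin m) (Fin m) ℂ) ≠ 0 := by
    intro h
    have h1 : (1 : Matrix (Fin m) (Fin m) ℂ) ⟨0, hm⟩ ⟨0, hm⟩ = 1 :=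
      Matrix.one_apply_eq _
    rw [h] at h1
    simp at h1
  have hBne : (A n)⁻¹ ≠ 0 := by
    intro h
    rw [h, Matrix.zero_mul] at hBA
    exact hone hBA.symm
  have hcB : 0 < N (A n)⁻¹ :=
    lt_of_le_of_ne (hNnonneg _) (fun h => hBne ((hN0 _).mp h.symm))
  have hρsum : ρ ^ n = N (A n)⁻¹ * ∑ j ∈ Finset.range n, N (A j) * ρ ^ j := by
    rw [← hroot, ← mul_assoc, mul_inv_cancel₀ hcB.ne', one_mul]
  -- the key numeric inequality
  have hterm : ∀ j ∈ Finset.range n,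
      N (A j) * r ^ j * ρ ^ (n - 1) ≤ N (A j) * ρ ^ j * r ^ (n - 1) := by
    intro j hj
    have hjn : j ≤ n - 1 := by
      have := Finset.mem_range.mp hj; omega
    have hpow : r ^ j * ρ ^ (n - 1) ≤ ρ ^ j * r ^ (n - 1) := by
      have e1 : r ^ j * ρ ^ (n - 1) = (r ^ j * ρ ^ j) * ρ ^ (n - 1 - j) := by
        rw [mul_assoc, ← pow_add]; congr 2; omega
      have hr1 : r ^ (n - 1) = r ^ j * r ^ (n - 1 - j) := by
        rw [← pow_add]; congr 1; omega
      have e2 : ρ ^ j * r ^ (n - 1) = (r ^ j * ρ ^ j) * r ^ (n - 1 - j) := by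
        rw [hr1]; ring
      rw [e1, e2]
      exact mul_le_mul_of_nonneg_left (pow_le_pow_left₀ hρ.le hr.le _) (by positivity)
    have := mul_le_mul_of_nonneg_left hpow (hNnonneg (A j))
    calc N (A j) * r ^ j * ρ ^ (n - 1) = N (A j) * (r ^ j * ρ ^ (n - 1)) := by ring
      _ ≤ N (A j) * (ρ ^ j * r ^ (n - 1)) := this
      _ = N (A j) * ρ ^ j * r ^ (n - 1) := by ring
  have hsum' : (∑ j ∈ Finset.range n, N (A j) * r ^ j) * ρ ^ (n - 1)
      ≤ (∑ j ∈ Finset.range n, N (A j) * ρ ^ j) * r ^ (n - 1) := by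
    rw [Finset.sum_mul, Finset.sum_mul]
    exact Finset.sum_le_sum hterm
  have hXnn : 0 ≤ ∑ j ∈ Finset.range n, N (A j) * r ^ j :=
    Finset.sum_nonneg fun j _ => mul_nonneg (hNnonneg _) (by positivity)
  have hkey : N (A n)⁻¹ * ∑ j ∈ Finset.range n, N (A j) * r ^ j < r ^ n := by
    have hp : (0:ℝ) < ρ ^ (n - 1) := pow_pos hρ _
    have hq : (0:ℝ) < r ^ (n - 1) := pow_pos hr0 _
    have eρ : ρ ^ n = ρ ^ (n - 1) * ρ := by
      rw [← pow_succ]; congr 1; omega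
    have er : r ^ n = r ^ (n - 1) * r := by
      rw [← pow_succ]; congr 1; omega
    have step : (N (A n)⁻¹ * ∑ j ∈ Finset.range n, N (A j) * r ^ j) * ρ ^ (n - 1)
        < r ^ n * ρ ^ (n - 1) := by
      calc (N (A n)⁻¹ * ∑ j ∈ Finset.range n, N (A j) * r ^ j) * ρ ^ (n - 1)
          = N (A n)⁻¹ * ((∑ j ∈ Finset.range n, N (A j) * r ^ j) * ρ ^ (n - 1)) := by ring
        _ ≤ N (A n)⁻¹ * ((∑ j ∈ Finset.range n, N (A j) * ρ ^ j) * r ^ (n - 1)) :=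
            mul_le_mul_of_nonneg_left hsum' hcB.le
        _ = ρ ^ n * r ^ (n - 1) := by rw [hρsum]; ring
        _ = ρ ^ (n - 1) * ρ * r ^ (n - 1) := by rw [← eρ]
        _ < ρ ^ (n - 1) * r * r ^ (n - 1) := by
            apply mul_lt_mul_of_pos_right _ hq
            exact mul_lt_mul_of_pos_left hr hp
        _ = r ^ n * ρ ^ (n - 1) := by rw [er]; ring
    exact lt_of_mul_lt_mul_right step hp.le
  -- N M < 1
  have hNS : N S ≤ ∑ j ∈ Finset.range n, N (A j) * r ^ j := by
    refine (hNsum _ _).trans (le_of_eq (Finset.sum_congr rfl fun j hj => ?_))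
    rw [hNsmul, norm_pow, mul_comm]
  have hNM : N M < 1 := by
    have e : N M = (r ^ n)⁻¹ * N ((A n)⁻¹ * S) := by
      rw [hMdef, hNsmul, norm_inv, norm_pow]
    have hchain : N ((A n)⁻¹ * S) < r ^ n :=
      lt_of_le_of_lt ((hNmul _ _).trans (mul_le_mul_of_nonneg_left hNS hcB.le)) hkey
    have hrn : (0:ℝ) < r ^ n := pow_pos hr0 n
    rw [e]
    calc (r ^ n)⁻¹ * N ((A n)⁻¹ * S) < (r ^ n)⁻¹ * r ^ n :=
          mul_lt_mul_of_pos_left hchain (inv_pos.mpr hrn)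
      _ = 1 := inv_mul_cancel₀ hrn.ne'
  -- det (1 + M) = 0 gives a nonzero kernel vector, contradicting N M < 1
  obtain ⟨v, hv, hMv⟩ := (Matrix.exists_mulVec_eq_zero_iff).mpr hdet1M
  set V : Matrix (Fin m) (Fin m) ℂ := Matrix.of fun i _ => v i with hVdef
  have hVne : V ≠ 0 := by
    intro h
    apply hv
    funext i
    have := Matrix.ext_iff.mpr h i ⟨0, hm⟩
    simpa [hVdef] using this
  have hMulV : (1 + M) * V = 0 := by
    ext i j
    have := congrFun hMv i
    simpa [hVdef, Matrix.mul_apply, Matrix.mulVec, dotProduct] using this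
  have hMV : M * V = -V := by
    rw [add_mul, one_mul] at hMulV
    exact eq_neg_of_add_eq_zero_right hMulV
  have hNV : 0 < N V :=
    lt_of_le_of_ne (hNnonneg V) (fun h => hVne ((hN0 V).mp h.symm))
  have hle : N V ≤ N M * N V := by
    calc N V = N (M * V) := by rw [hMV, hNneg]
      _ ≤ N M * N V := hNmul _ _
  nlinarith [hle, hNM, hNV]
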